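/- Let d₁, d₂ be positive integers and let M be a Hermitian matrix indexed by (Fin d₁ × Fin d₂). Suppose that for all vectors x : Fin d₁ → ℂ and y : Fin d₂ → ℂ the expectation value of M in the simple-tensor vector x ⊗ y vanishes: (star (x ⊗ y)) ⬝ᵥ (M *ᵥ (x ⊗ y)) = 0, where (x ⊗ y)(i,j) = x i · y j. Then M = 0. -/

import Mathlib

open Matrix

theorem quad_form_zero {n : Type*} [Fintype n] [DecidableEq n] (N : Matrix n n ℂ)
    (h : ∀ x : n → ℂ, star x ⬝ᵥ N *ᵥ x = 0) : N = 0 := by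
  have key : ∀ (a c : n) (t : ℂ),
      N a a + (starRingEnd ℂ) t * t * N c c + t * N a c + (starRingEnd ℂ) t * N c a = 0 := by
    intro a c t
    have h1 := h ((Pi.single a 1 : n → ℂ) + t • (Pi.single c 1 : n → ℂ))
    simp only [star_add, star_smul, add_dotProduct, smul_dotProduct, mulVec_add, mulVec_smul,
      dotProduct_add, dotProduct_smul, mulVec_single, mul_one,
      Pi.star_apply, smul_eq_mul] at h1
    rw [show (star (Pi.single a (1:ℂ)) : n → ℂ) = Pi.single a 1 by
      funext j; simp [Pi.single_apply, apply_ite]] at h1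
    rw [show (star (Pi.single c (1:ℂ)) : n → ℂ) = Pi.single c 1 by
      funext j; simp [Pi.single_apply, apply_ite]] at h1
    simp only [single_dotProduct, one_mul, RCLike.star_def, MulOpposite.op_one, one_smul,
      Matrix.col_apply] at h1
    linear_combination h1
  have hd : ∀ i, N i i = 0 := by
    intro i
    have := key i i 0
    simpa using this
  ext a c
  have k1 := key a c 1
  have k2 := key a c Complex.I
  simp [hd, Complex.conj_I] at k1 k2
  simp only [Matrix.zero_apply]
  linear_combination k1/2 - Complex.I/2 * k2 + ((N a c - N c a)/2) * Complex.I_sq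

/-- If a Hermitian matrix `M` on `ℂ^{d₁} ⊗ ℂ^{d₂}` has vanishing
expectation value in every simple-tensor vector `x ⊗ y` (where
`(x ⊗ y)(i,j) = x i * y j`), then `M = 0`. -/
theorem eq_zero_of_product_expectations_vanish (d₁ d₂ : ℕ) (hd₁ : 0 < d₁) (hd₂ : 0 < d₂)
    (M : Matrix (Fin d₁ × Fin d₂) (Fin d₁ × Fin d₂) ℂ) (hM : M.IsHermitian)
    (h : ∀ (x : Fin d₁ → ℂ) (y : Fin d₂ → ℂ),
      star (fun p : Fin d₁ × Fin d₂ => x p.1 * y p.2) ⬝ᵥ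
        (M *ᵥ fun p : Fin d₁ × Fin d₂ => x p.1 * y p.2) = 0) :
    M = 0 := by
  have h1 : ∀ y : Fin d₂ → ℂ,
      (Matrix.of fun a c : Fin d₁ =>
        star y ⬝ᵥ (Matrix.of fun b d : Fin d₂ => M (a, b) (c, d)) *ᵥ y) = 0 := by
    intro y
    apply quad_form_zero
    intro x
    rw [← h x y]
    simp only [dotProduct, mulVec, Matrix.of_apply, Fintype.sum_prod_type, Finset.mul_sum,
      Finset.sum_mul, Pi.star_apply, star_mul']
    refine Finset.sum_congr rfl fun a _ => ?_
    rw [Finset.sum_comm]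
    refine Finset.sum_congr rfl fun b _ => Finset.sum_congr rfl fun c _ =>
      Finset.sum_congr rfl fun d _ => ?_
    ring
  have h2 : ∀ (a c : Fin d₁), (Matrix.of fun b d : Fin d₂ => M (a, b) (c, d)) = 0 := by
    intro a c
    apply quad_form_zero
    intro y
    have := congrFun (congrFun (h1 y) a) c
    simpa using this
  ext ⟨a, b⟩ ⟨c, d⟩
  simpa using congrFun (congrFun (h2 a c) b) d
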